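/- arXiv:2507.00531 — 5 statements merged into one kernel-verified Lean document; each statement's English description precedes it below -/
import Mathlib

section
/- Let A, B be real n×n matrices with σ_min(A) > ‖B‖ (spectral norm). Then for every c ∈ ℝⁿ, the generalized absolute value equation Ax − B|x| = c (where |x| is the componentwise absolute value) has a solution, and this solution is unique. -/
open Matrix

noncomputable def specNorm {n : ℕ} (A : Matrix (Fin n) (Fin n) ℝ) : ℝ :=
  ‖(Matrix.toEuclideanCLM (𝕜 := ℝ) A : EuclideanSpace ℝ (Fin n) →L[ℝ] EuclideanSpace ℝ (Fin n))‖

noncomputable def sigmaMin {n : ℕ} (A : Matrix (Fin n) (Fin n) ℝ) : ℝ :=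
  sInf {r : ℝ | ∃ x : EuclideanSpace ℝ (Fin n), ‖x‖ = 1 ∧ r = ‖(A.mulVec x : Fin n → ℝ)‖}

noncomputable def vabs {n : ℕ} (x : EuclideanSpace ℝ (Fin n)) : EuclideanSpace ℝ (Fin n) := WithLp.toLp 2 (fun i => |x i|)

/-- Explicit identity map into Euclidean space, to control norm instances. -/
def toE {n : ℕ} (v : Fin n → ℝ) : EuclideanSpace ℝ (Fin n) := WithLp.toLp 2 v

lemma vabs_lip {n : ℕ} (x y : EuclideanSpace ℝ (Fin n)) : ‖vabs x - vabs y‖ ≤ ‖x - y‖ := by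
  rw [EuclideanSpace.norm_eq, EuclideanSpace.norm_eq]
  apply Real.sqrt_le_sqrt
  apply Finset.sum_le_sum
  intro i _
  have h1 : (vabs x - vabs y) i = |x i| - |y i| := by simp [vabs]
  have h2 : (x - y) i = x i - y i := by simp
  rw [h1, h2]
  have h3 : ‖|x i| - |y i|‖ ≤ ‖x i - y i‖ := by
    simpa [Real.norm_eq_abs] using abs_abs_sub_abs_le_abs_sub (x i) (y i)
  exact pow_le_pow_left₀ (norm_nonneg _) h3 2

lemma specNorm_bound {n : ℕ} (B : Matrix (Fin n) (Fin n) ℝ) (v : EuclideanSpace ℝ (Fin n)) :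
    ‖toE (B.mulVec v)‖ ≤ specNorm B * ‖v‖ := by
  have : toE (B.mulVec v) = Matrix.toEuclideanCLM (𝕜 := ℝ) B v := rfl
  rw [this]
  exact (Matrix.toEuclideanCLM (𝕜 := ℝ) B).le_opNorm v

lemma coord_le_norm {n : ℕ} (v : EuclideanSpace ℝ (Fin n)) (i : Fin n) : |v i| ≤ ‖v‖ := by
  rw [EuclideanSpace.norm_eq]
  have h1 : |v i| = Real.sqrt (|v i| ^ 2) := by
    rw [Real.sqrt_sq (abs_nonneg _)]
  rw [h1]
  apply Real.sqrt_le_sqrt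
  exact Finset.single_le_sum (fun j _ => sq_nonneg |v j|) (Finset.mem_univ i)

lemma sigmaMin_bound {n : ℕ} (A : Matrix (Fin n) (Fin n) ℝ) (x : EuclideanSpace ℝ (Fin n)) :
    sigmaMin A * ‖x‖ ≤ ‖toE (A.mulVec x)‖ := by
  have key : ∀ u : EuclideanSpace ℝ (Fin n), ‖u‖ = 1 → sigmaMin A ≤ ‖toE (A.mulVec u)‖ := by
    intro u hu
    have hbdd : BddBelow {r : ℝ | ∃ y : EuclideanSpace ℝ (Fin n), ‖y‖ = 1 ∧
        r = ‖(A.mulVec y : Fin n → ℝ)‖} := by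
      refine ⟨0, fun r hr => ?_⟩
      obtain ⟨y, _, rfl⟩ := hr
      exact norm_nonneg _
    have hle : sigmaMin A ≤ ‖(A.mulVec u : Fin n → ℝ)‖ := csInf_le hbdd ⟨u, hu, rfl⟩
    -- the norm in the set is the sup-type norm on `Fin n → ℝ`; bound it by the Euclidean norm
    have hsup : ‖(A.mulVec u : Fin n → ℝ)‖ ≤ ‖toE (A.mulVec u)‖ := by
      apply pi_norm_le_iff_of_nonneg (norm_nonneg (toE (A.mulVec u))) |>.mpr
      intro i
      simpa [Real.norm_eq_abs, toE] using coord_le_norm (toE (A.mulVec u)) i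
    linarith
  rcases eq_or_ne x 0 with rfl | hx
  · have h0 : toE (A.mulVec (0 : EuclideanSpace ℝ (Fin n))) = 0 := by
      have : A.mulVec (0 : Fin n → ℝ) = 0 := Matrix.mulVec_zero A
      simp [toE]
    rw [h0]
    simp
  · have hxn : ‖x‖ ≠ 0 := norm_ne_zero_iff.mpr hx
    have hxp : (0:ℝ) < ‖x‖ := norm_pos_iff.mpr hx
    set u : EuclideanSpace ℝ (Fin n) := ‖x‖⁻¹ • x with hu
    have hun : ‖u‖ = 1 := by
      rw [hu, norm_smul]
      simp [abs_of_nonneg (inv_nonneg.mpr (norm_nonneg x)), inv_mul_cancel₀ hxn]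
    have hle := key u hun
    have hmv : toE (A.mulVec u) = ‖x‖⁻¹ • toE (A.mulVec x) := by
      have : A.mulVec (‖x‖⁻¹ • (x : Fin n → ℝ)) = ‖x‖⁻¹ • A.mulVec (x : Fin n → ℝ) :=
        Matrix.mulVec_smul ..
      rw [hu, WithLp.ofLp_smul, this]
      rfl
    rw [hmv, norm_smul] at hle
    have hle2 : sigmaMin A ≤ ‖x‖⁻¹ * ‖toE (A.mulVec x)‖ := by
      simpa [abs_of_nonneg (inv_nonneg.mpr (norm_nonneg x)), Real.norm_eq_abs] using hle
    calc sigmaMin A * ‖x‖ ≤ (‖x‖⁻¹ * ‖toE (A.mulVec x)‖) * ‖x‖ :=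
          mul_le_mul_of_nonneg_right hle2 (norm_nonneg x)
      _ = ‖toE (A.mulVec x)‖ := by field_simp

theorem gave_exists_unique {n : ℕ} (A B : Matrix (Fin n) (Fin n) ℝ)
    (h : specNorm B < sigmaMin A) (c : EuclideanSpace ℝ (Fin n)) :
    ∃! x : EuclideanSpace ℝ (Fin n), A.mulVec x - B.mulVec (vabs x) = c := by
  have hB0 : (0:ℝ) ≤ specNorm B := norm_nonneg _
  have hσ : (0:ℝ) < sigmaMin A := lt_of_le_of_lt hB0 h
  set σ := sigmaMin A with hσdef
  set L : EuclideanSpace ℝ (Fin n) →ₗ[ℝ] EuclideanSpace ℝ (Fin n) :=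
    ((Matrix.toEuclideanCLM (𝕜 := ℝ) A :
      EuclideanSpace ℝ (Fin n) →L[ℝ] EuclideanSpace ℝ (Fin n)) :
      EuclideanSpace ℝ (Fin n) →ₗ[ℝ] EuclideanSpace ℝ (Fin n)) with hL
  have hLapp : ∀ x : EuclideanSpace ℝ (Fin n), L x = toE (A.mulVec x) := fun _ => rfl
  have hLinj : Function.Injective L := by
    intro x y hxy
    have h1 : L (x - y) = 0 := by rw [map_sub, hxy, sub_self]
    have h2 : σ * ‖x - y‖ ≤ ‖L (x - y)‖ := by
      rw [hLapp]; exact sigmaMin_bound A (x - y)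
    rw [h1, norm_zero] at h2
    have h3 : ‖x - y‖ ≤ 0 := by nlinarith [norm_nonneg (x - y)]
    have h4 : x - y = 0 := norm_eq_zero.mp (le_antisymm h3 (norm_nonneg _))
    exact sub_eq_zero.mp h4
  have hLbij : Function.Bijective L :=
    ⟨hLinj, (LinearMap.injective_iff_surjective).mp hLinj⟩
  set e : EuclideanSpace ℝ (Fin n) ≃ₗ[ℝ] EuclideanSpace ℝ (Fin n) :=
    LinearEquiv.ofBijective L hLbij with he
  have heapp : ∀ x, e x = toE (A.mulVec x) := fun x => hLapp x
  have hsymm : ∀ z : EuclideanSpace ℝ (Fin n), ‖e.symm z‖ ≤ σ⁻¹ * ‖z‖ := by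
    intro z
    have h1 : σ * ‖e.symm z‖ ≤ ‖toE (A.mulVec (e.symm z))‖ := sigmaMin_bound A _
    have h2 : toE (A.mulVec (e.symm z)) = z := by
      rw [← heapp]; exact e.apply_symm_apply z
    rw [h2] at h1
    calc ‖e.symm z‖ = σ⁻¹ * (σ * ‖e.symm z‖) := by field_simp
      _ ≤ σ⁻¹ * ‖z‖ := mul_le_mul_of_nonneg_left h1 (inv_nonneg.mpr hσ.le)
  set f : EuclideanSpace ℝ (Fin n) → EuclideanSpace ℝ (Fin n) :=
    fun x => e.symm (toE (B.mulVec (vabs x)) + c) with hf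
  have hfix_iff : ∀ x, f x = x ↔ A.mulVec x - B.mulVec (vabs x) = c := by
    intro x
    have hgoal : (A.mulVec x - B.mulVec (vabs x) = c) ↔
        (toE (A.mulVec x) - toE (B.mulVec (vabs x)) = c) := by
      constructor
      · intro h'; rw [← WithLp.toLp_ofLp (x := c), ← h']; rfl
      · intro h'; rw [← h']; rfl
    rw [hgoal]
    constructor
    · intro hfx
      have h1 : e x = toE (B.mulVec (vabs x)) + c := by
        conv_lhs => rw [← hfx]
        simp only [hf]
        exact e.apply_symm_apply _
      rw [heapp] at h1
      rw [h1]; abel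
    · intro hx
      have h1 : toE (A.mulVec x) = toE (B.mulVec (vabs x)) + c := by
        rw [← hx]; abel
      rw [hf]
      simp only
      rw [← h1, ← heapp]
      exact e.symm_apply_apply x
  have hlip : ∀ x y, ‖f x - f y‖ ≤ (specNorm B / σ) * ‖x - y‖ := by
    intro x y
    have h1 : f x - f y = e.symm (toE (B.mulVec (vabs x - vabs y))) := by
      rw [hf]
      simp only
      rw [← map_sub]
      congr 1
      have hsub : toE (B.mulVec ((vabs x : Fin n → ℝ) - (vabs y : Fin n → ℝ))) =
          toE (B.mulVec (vabs x)) - toE (B.mulVec (vabs y)) :=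
        congrArg toE (Matrix.mulVec_sub B _ _)
      have h2 : (toE (B.mulVec (vabs x)) + c) - (toE (B.mulVec (vabs y)) + c) =
          toE (B.mulVec (vabs x)) - toE (B.mulVec (vabs y)) := by abel
      rw [h2, ← hsub]
    rw [h1]
    calc ‖e.symm (toE (B.mulVec (vabs x - vabs y)))‖
        ≤ σ⁻¹ * ‖toE (B.mulVec (vabs x - vabs y))‖ := hsymm _
      _ ≤ σ⁻¹ * (specNorm B * ‖vabs x - vabs y‖) :=
          mul_le_mul_of_nonneg_left (specNorm_bound B _) (inv_nonneg.mpr hσ.le)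
      _ ≤ σ⁻¹ * (specNorm B * ‖x - y‖) :=
          mul_le_mul_of_nonneg_left
            (mul_le_mul_of_nonneg_left (vabs_lip x y) hB0) (inv_nonneg.mpr hσ.le)
      _ = (specNorm B / σ) * ‖x - y‖ := by ring
  set K : NNReal := ⟨specNorm B / σ, div_nonneg hB0 hσ.le⟩ with hK
  have hK1 : K < 1 := by
    rw [← NNReal.coe_lt_coe]
    simp only [hK, NNReal.coe_one, NNReal.coe_mk]
    exact (div_lt_one hσ).mpr h
  have hfl : LipschitzWith K f := by
    intro x y
    rw [edist_dist, edist_dist, dist_eq_norm, dist_eq_norm]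
    calc ENNReal.ofReal ‖f x - f y‖ ≤ ENNReal.ofReal ((specNorm B / σ) * ‖x - y‖) :=
          ENNReal.ofReal_le_ofReal (hlip x y)
      _ = ENNReal.ofReal (specNorm B / σ) * ENNReal.ofReal ‖x - y‖ :=
          ENNReal.ofReal_mul (div_nonneg hB0 hσ.le)
      _ = (K : ENNReal) * ENNReal.ofReal ‖x - y‖ := by
          congr 1
          rw [hK]
          simp [ENNReal.ofReal, Real.toNNReal, div_nonneg hB0 hσ.le]
          rfl
  have hcontr : ContractingWith K f := ⟨hK1, hfl⟩
  have hne : Nonempty (EuclideanSpace ℝ (Fin n)) := ⟨0⟩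
  obtain ⟨x, hx⟩ := hcontr.exists_fixedPoint 0 (by
    rw [edist_dist]; exact ENNReal.ofReal_ne_top)
  refine ⟨x, (hfix_iff x).mp hx.1, ?_⟩
  -- uniqueness
  intro y hy
  have hx1 : A.mulVec x - B.mulVec (vabs x) = c := (hfix_iff x).mp hx.1
  have hy' : toE (A.mulVec y) - toE (B.mulVec (vabs y)) = c := by
    rw [← WithLp.toLp_ofLp (x := c), ← hy]; rfl
  have hx' : toE (A.mulVec x) - toE (B.mulVec (vabs x)) = c := by
    rw [← WithLp.toLp_ofLp (x := c), ← hx1]; rfl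
  have hdiff : toE (A.mulVec y) - toE (A.mulVec x) =
      toE (B.mulVec (vabs y)) - toE (B.mulVec (vabs x)) := by
    have := hy'.trans hx'.symm
    linear_combination (norm := abel_nf) this
  have hA : toE (A.mulVec (y - x)) = toE (B.mulVec (vabs y - vabs x)) := by
    have h1 : toE (A.mulVec ((y : Fin n → ℝ) - (x : Fin n → ℝ))) =
        toE (A.mulVec y) - toE (A.mulVec x) := congrArg toE (Matrix.mulVec_sub A _ _)
    have h2 : toE (B.mulVec ((vabs y : Fin n → ℝ) - (vabs x : Fin n → ℝ))) =
        toE (B.mulVec (vabs y)) - toE (B.mulVec (vabs x)) := congrArg toE (Matrix.mulVec_sub B _ _)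
    calc toE (A.mulVec (y - x)) = toE (A.mulVec y) - toE (A.mulVec x) := h1
      _ = toE (B.mulVec (vabs y)) - toE (B.mulVec (vabs x)) := hdiff
      _ = toE (B.mulVec (vabs y - vabs x)) := h2.symm
  have hb1 : σ * ‖y - x‖ ≤ ‖toE (A.mulVec (y - x))‖ := sigmaMin_bound A _
  have hb2 : ‖toE (B.mulVec (vabs y - vabs x))‖ ≤ specNorm B * ‖vabs y - vabs x‖ :=
    specNorm_bound B _
  have hb3 : ‖vabs y - vabs x‖ ≤ ‖y - x‖ := vabs_lip y x
  rw [hA] at hb1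
  by_contra hne'
  have hyx : (0:ℝ) < ‖y - x‖ := by
    rw [norm_pos_iff, sub_ne_zero]; exact hne'
  nlinarith
end

section
/- Conversely, if vectors z, w ∈ ℝⁿ satisfy Cz − Dw = p, z ≥ 0, w ≥ 0, wᵀz = 0 for real n×n matrices C, D and p ∈ ℝⁿ, then x = z − w solves Ax − B|x| = c with A = (C+D)/2, B = (D−C)/2, c = p. -/
open Matrix

theorem hlcp_to_gave {n : ℕ} (C D : Matrix (Fin n) (Fin n) ℝ) (p z w : Fin n → ℝ)
    (heq : C.mulVec z - D.mulVec w = p) (hz : 0 ≤ z) (hw : 0 ≤ w) (hzw : w ⬝ᵥ z = 0) :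
    ((C + D) / 2).mulVec (z - w) - ((D - C) / 2).mulVec (fun i => |(z - w) i|) = p := by
  have hprod : ∀ i, w i * z i = 0 := by
    intro i
    have hsum : ∑ j, w j * z j = 0 := hzw
    have hnn : ∀ j ∈ Finset.univ, 0 ≤ w j * z j := fun j _ => mul_nonneg (hw j) (hz j)
    exact (Finset.sum_eq_zero_iff_of_nonneg hnn).mp hsum i (Finset.mem_univ i)
  have habs : (fun i => |(z - w) i|) = z + w := by
    funext i
    rcases mul_eq_zero.mp (hprod i) with h | h
    · simp [Pi.sub_apply, Pi.add_apply, h, abs_of_nonneg (hz i)]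
    · simp [Pi.sub_apply, Pi.add_apply, h, abs_of_nonneg (hw i)]
  have hdiv : ∀ M : Matrix (Fin n) (Fin n) ℝ, M / 2 = (2⁻¹ : ℝ) • M := by
    intro M
    rw [div_eq_mul_inv]
    have h2 : (2 : Matrix (Fin n) (Fin n) ℝ)⁻¹ = (2⁻¹ : ℝ) • 1 :=
      Matrix.inv_eq_right_inv (by
        rw [mul_smul_comm, mul_one]
        ext i j
        rw [show (2 : Matrix (Fin n) (Fin n) ℝ) = 1 + 1 from one_add_one_eq_two.symm]
        simp [Matrix.smul_apply, Matrix.add_apply, Matrix.one_apply]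
        split <;> norm_num)
    rw [h2, mul_smul_comm, mul_one]
  rw [habs, hdiv, hdiv, ← heq]
  funext i
  simp only [Pi.sub_apply, Matrix.smul_mulVec, Pi.smul_apply, Matrix.add_mulVec,
    Matrix.sub_mulVec, Matrix.mulVec_add, Matrix.mulVec_sub, Pi.add_apply, smul_eq_mul]
  ring
end

section
/- Let M be a real n×n matrix and q ∈ ℝⁿ. If x ∈ ℝⁿ solves the GAVE (M+I)x − (M−I)|x| = q, then z = |x| − x and w = |x| + x satisfy the LCP: w = Mz + q, z ≥ 0, w ≥ 0, and wᵀz = 0. -/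
open Matrix

theorem gave_to_lcp {n : ℕ} (M : Matrix (Fin n) (Fin n) ℝ) (q x : Fin n → ℝ)
    (hx : (M + 1).mulVec x - (M - 1).mulVec (fun i => |x i|) = q) :
    (fun i => |x i| + x i) = M.mulVec (fun i => |x i| - x i) + q ∧
      (0 : Fin n → ℝ) ≤ (fun i => |x i| - x i) ∧
      (0 : Fin n → ℝ) ≤ (fun i => |x i| + x i) ∧
      (fun i => |x i| + x i) ⬝ᵥ (fun i => |x i| - x i) = 0 := by
  refine ⟨?_, fun i => by simp [sub_nonneg, le_abs_self],
    fun i => by simpa [add_comm] using neg_le_iff_add_nonneg.mp (neg_abs_le (x i)), ?_⟩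
  · subst hx
    funext i
    simp only [Pi.add_apply, add_mulVec, sub_mulVec, one_mulVec, Pi.sub_apply,
      mulVec, dotProduct, Matrix.sub_apply, Matrix.one_apply]
    simp only [mul_sub, Finset.sum_sub_distrib]
    ring
  · simp only [dotProduct]
    apply Finset.sum_eq_zero
    intro j _
    rcases abs_cases (x j) with ⟨h, _⟩ | ⟨h, _⟩ <;> rw [h] <;> ring
end

section
/- Let A be a real n×n matrix and c ∈ ℝⁿ. A vector x ∈ ℝⁿ solves Ax − |x| = c if and only if Ax + x − c ≥ 0, Ax − x − c ≥ 0, and (Ax + x − c)ᵀ(Ax − x − c) = 0. -/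
open Matrix

theorem ave_iff_glcp {n : ℕ} (A : Matrix (Fin n) (Fin n) ℝ) (c x : Fin n → ℝ) :
    A.mulVec x - (fun i => |x i|) = c ↔
      0 ≤ A.mulVec x + x - c ∧ 0 ≤ A.mulVec x - x - c ∧
        (A.mulVec x + x - c) ⬝ᵥ (A.mulVec x - x - c) = 0 := by
  set y := A.mulVec x with hy
  constructor
  · intro h
    have hc : ∀ i, y i - |x i| = c i := fun i => congrFun h i
    refine ⟨fun i => ?_, fun i => ?_, ?_⟩
    · have := hc i
      simp only [Pi.zero_apply, Pi.sub_apply, Pi.add_apply]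
      have := abs_nonneg (x i)
      have := neg_abs_le (x i)
      linarith [hc i]
    · simp only [Pi.zero_apply, Pi.sub_apply, Pi.add_apply]
      have := le_abs_self (x i)
      linarith [hc i]
    · unfold dotProduct
      apply Finset.sum_eq_zero
      intro i _
      simp only [Pi.sub_apply, Pi.add_apply]
      have h1 := hc i
      have h2 : (y i + x i - c i) * (y i - x i - c i) = (|x i| + x i) * (|x i| - x i) := by
        congr 1 <;> linarith
      rw [h2]
      have := sq_abs (x i)
      nlinarith [sq_abs (x i)]
  · rintro ⟨h1, h2, h3⟩
    have hz : ∀ i ∈ Finset.univ, (y i + x i - c i) * (y i - x i - c i) = 0 := by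
      intro i _
      have := Finset.sum_eq_zero_iff_of_nonneg (s := Finset.univ)
        (f := fun i => (y i + x i - c i) * (y i - x i - c i)) ?_
      · exact (this.mp h3) i (Finset.mem_univ i)
      · intro j _
        exact mul_nonneg (by have := h1 j; simpa using this) (by have := h2 j; simpa using this)
    funext i
    have hzi := hz i (Finset.mem_univ i)
    have h1i : 0 ≤ y i + x i - c i := by have := h1 i; simpa using this
    have h2i : 0 ≤ y i - x i - c i := by have := h2 i; simpa using this
    simp only [Pi.sub_apply]
    rcases mul_eq_zero.mp hzi with hh | hh
    · have hx : x i ≤ 0 := by linarith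
      rw [abs_of_nonpos hx]; linarith
    · have hx : 0 ≤ x i := by linarith
      rw [abs_of_nonneg hx]; linarith
end

section
/- Let V : [0,∞) → ℝ be differentiable and nonnegative with V'(t) ≤ −c₁·V(t)^{(ξ−1)/ξ} − c₂·V(t)^{(ξ+1)/ξ} for all t where V(t) > 0, with c₁, c₂ > 0 and ξ > 2. Then V(T) = 0 for all T ≥ T̂, where T̂ = (ξ/√(c₁c₂))·arctan(√(c₂/c₁)·V(0)^{1/ξ}); in particular V(T) = 0 for all T ≥ πξ/(2√(c₁c₂)). -/
open Real Set

theorem settling_time {ξ c₁ c₂ : ℝ} (hξ : 2 < ξ) (hc₁ : 0 < c₁) (hc₂ : 0 < c₂)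
    (V V' : ℝ → ℝ) (hV : ∀ t ≥ (0 : ℝ), HasDerivAt V (V' t) t)
    (hVnn : ∀ t ≥ (0 : ℝ), 0 ≤ V t)
    (hineq : ∀ t ≥ (0 : ℝ), 0 < V t →
      V' t ≤ -c₁ * V t ^ ((ξ - 1) / ξ) - c₂ * V t ^ ((ξ + 1) / ξ)) :
    (∀ T ≥ (ξ / Real.sqrt (c₁ * c₂)) * Real.arctan (Real.sqrt (c₂ / c₁) * V 0 ^ (1 / ξ)),
        V T = 0) ∧
      ∀ T ≥ Real.pi * ξ / (2 * Real.sqrt (c₁ * c₂)), V T = 0 := by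
  have hξ0 : 0 < ξ := by linarith
  set s := Real.sqrt (c₂ / c₁) with hs
  set B := Real.sqrt (c₁ * c₂) with hB
  have hs0 : 0 < s := Real.sqrt_pos.2 (div_pos hc₂ hc₁)
  have hB0 : 0 < B := Real.sqrt_pos.2 (mul_pos hc₁ hc₂)
  have hs2 : s ^ 2 = c₂ / c₁ := Real.sq_sqrt (div_pos hc₂ hc₁).le
  have hsB : s * c₁ = B := by
    have h1 : (s * c₁) ^ 2 = B ^ 2 := by
      rw [mul_pow, hs2, hB, Real.sq_sqrt (mul_pos hc₁ hc₂).le]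
      field_simp
    nlinarith [mul_pos (mul_pos hs0 hc₁) hB0]
  -- V' nonpositive on (0, ∞)
  have hVd0 : ∀ t > (0 : ℝ), V' t ≤ 0 := by
    intro t ht
    by_cases hv : 0 < V t
    · have h1 := hineq t ht.le hv
      have h2 : 0 < V t ^ ((ξ - 1) / ξ) := Real.rpow_pos_of_pos hv _
      have h3 : 0 < V t ^ ((ξ + 1) / ξ) := Real.rpow_pos_of_pos hv _
      nlinarith
    · have hv0 : V t = 0 := le_antisymm (not_lt.1 hv) (hVnn t ht.le)
      have hmin : IsLocalMin V t := by
        filter_upwards [Ici_mem_nhds ht] with y hy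
        rw [hv0]; exact hVnn y hy
      exact le_of_eq (hmin.hasDerivAt_eq_zero (hV t ht.le))
  -- V is antitone on [0, ∞)
  have hVmono : AntitoneOn V (Ici 0) := by
    apply antitoneOn_of_deriv_nonpos (convex_Ici 0)
    · intro t ht
      exact (hV t ht).continuousAt.continuousWithinAt
    · intro t ht
      rw [interior_Ici] at ht
      exact (hV t (le_of_lt ht)).differentiableAt.differentiableWithinAt
    · intro t ht
      rw [interior_Ici] at ht
      rw [(hV t (le_of_lt ht)).deriv]
      exact hVd0 t ht
  set A := Real.arctan (s * V 0 ^ (1 / ξ)) with hA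
  have hA0 : 0 ≤ A := by
    have h := Real.arctan_strictMono.monotone
      (mul_nonneg hs0.le (Real.rpow_nonneg (hVnn 0 le_rfl) (1 / ξ)))
    rwa [Real.arctan_zero] at h
  set T₀ := (ξ / B) * A with hT₀
  have hT₀0 : 0 ≤ T₀ := by positivity
  -- key: V T₀ = 0
  have key : V T₀ = 0 := by
    by_contra hne
    have hVT : 0 < V T₀ := lt_of_le_of_ne (hVnn T₀ hT₀0) (Ne.symm hne)
    have hVpos : ∀ t ∈ Icc (0 : ℝ) T₀, 0 < V t := by
      intro t ht
      exact lt_of_lt_of_le hVT (hVmono (mem_Ici.2 ht.1) (mem_Ici.2 hT₀0) ht.2)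
    set g : ℝ → ℝ := fun t => Real.arctan (s * V t ^ (1 / ξ)) + (B / ξ) * t with hg
    have hgd : ∀ t ∈ Ioo (0 : ℝ) T₀, HasDerivAt g
        (1 / (1 + (s * V t ^ (1 / ξ)) ^ 2) * (s * (V' t * (1 / ξ) * V t ^ (1 / ξ - 1))) + B / ξ * 1) t := by
      intro t ht
      have hv : 0 < V t := hVpos t ⟨ht.1.le, ht.2.le⟩
      have h1 : HasDerivAt (fun u => V u ^ (1 / ξ)) (V' t * (1 / ξ) * V t ^ (1 / ξ - 1)) t :=
        (hV t ht.1.le).rpow_const (Or.inl hv.ne')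
      exact ((h1.const_mul s).arctan).add ((hasDerivAt_id t).const_mul (B / ξ))
    have hganti : AntitoneOn g (Icc 0 T₀) := by
      apply antitoneOn_of_deriv_nonpos (convex_Icc 0 T₀)
      · intro t ht
        have hv : 0 < V t := hVpos t ht
        have h1 : ContinuousAt (fun u => V u ^ (1 / ξ)) t :=
          (Real.continuousAt_rpow_const _ _ (Or.inl hv.ne')).comp (hV t ht.1).continuousAt
        exact (((Real.continuous_arctan.continuousAt.comp
          (continuousAt_const.mul h1)).add
          (continuousAt_const.mul continuousAt_id))).continuousWithinAt
      · intro t ht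
        rw [interior_Icc] at ht
        exact (hgd t ht).differentiableAt.differentiableWithinAt
      · intro t ht
        rw [interior_Icc] at ht
        rw [(hgd t ht).deriv]
        have hv : 0 < V t := hVpos t ⟨ht.1.le, ht.2.le⟩
        set v := V t with hvdef
        have hV't := hineq t ht.1.le hv
        have e1 : v ^ (1 / ξ - 1) * v ^ ((ξ - 1) / ξ) = 1 := by
          rw [← Real.rpow_add hv, show 1 / ξ - 1 + (ξ - 1) / ξ = 0 by field_simp; ring, Real.rpow_zero]
        have e2 : v ^ (1 / ξ - 1) * v ^ ((ξ + 1) / ξ) = v ^ (2 / ξ) := by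
          rw [← Real.rpow_add hv]
          congr 1
          field_simp
          ring
        have hv2 : v ^ (1 / ξ) * v ^ (1 / ξ) = v ^ (2 / ξ) := by
          rw [← Real.rpow_add hv]
          congr 1
          ring
        have hD : (0 : ℝ) < 1 + (s * v ^ (1 / ξ)) ^ 2 := by positivity
        have goalnum : s * (V' t * (1 / ξ) * v ^ (1 / ξ - 1)) ≤
            -(B / ξ) * (1 + (s * v ^ (1 / ξ)) ^ 2) := by
          have hpos : (0 : ℝ) ≤ s * (1 / ξ) * v ^ (1 / ξ - 1) := by positivity
          have h2 := mul_le_mul_of_nonneg_left hV't hpos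
          calc s * (V' t * (1 / ξ) * v ^ (1 / ξ - 1))
              = s * (1 / ξ) * v ^ (1 / ξ - 1) * V' t := by ring
            _ ≤ s * (1 / ξ) * v ^ (1 / ξ - 1) *
                (-c₁ * v ^ ((ξ - 1) / ξ) - c₂ * v ^ ((ξ + 1) / ξ)) := h2
            _ = -(s * c₁ / ξ) * (v ^ (1 / ξ - 1) * v ^ ((ξ - 1) / ξ))
                - (s * c₂ / ξ) * (v ^ (1 / ξ - 1) * v ^ ((ξ + 1) / ξ)) := by ring
            _ = -(B / ξ) - (s * c₂ / ξ) * v ^ (2 / ξ) := by rw [e1, e2, hsB]; ring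
            _ = -(B / ξ) * (1 + (c₂ / c₁) * v ^ (2 / ξ)) := by
                rw [← hsB]; field_simp; ring
            _ = -(B / ξ) * (1 + (s * v ^ (1 / ξ)) ^ 2) := by
                rw [mul_pow, hs2, sq, hv2]
        have hdiv : 1 / (1 + (s * v ^ (1 / ξ)) ^ 2) * (s * (V' t * (1 / ξ) * v ^ (1 / ξ - 1)))
            ≤ -(B / ξ) := by
          rw [one_div, inv_mul_eq_div, div_le_iff₀ hD]
          linarith
        linarith
    have hle := hganti (left_mem_Icc.2 hT₀0) (right_mem_Icc.2 hT₀0) hT₀0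
    have hBT : (B / ξ) * T₀ = A := by
      rw [hT₀]
      field_simp
    have harc : 0 < Real.arctan (s * V T₀ ^ (1 / ξ)) := by
      have h := Real.arctan_strictMono (mul_pos hs0 (Real.rpow_pos_of_pos hVT (1 / ξ)))
      rwa [Real.arctan_zero] at h
    simp only [hg, mul_zero, add_zero] at hle
    rw [hBT] at hle
    linarith
  have main : ∀ T ≥ T₀, V T = 0 := by
    intro T hT
    refine le_antisymm ?_ (hVnn T (hT₀0.trans hT))
    have := hVmono (mem_Ici.2 hT₀0) (mem_Ici.2 (hT₀0.trans hT)) hT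
    rwa [key] at this
  refine ⟨main, fun T hT => main T (le_trans ?_ hT)⟩
  have h1 : A ≤ Real.pi / 2 := (Real.arctan_lt_pi_div_two _).le
  have h2 : T₀ ≤ (ξ / B) * (Real.pi / 2) :=
    mul_le_mul_of_nonneg_left h1 (by positivity)
  calc T₀ ≤ (ξ / B) * (Real.pi / 2) := h2
    _ = Real.pi * ξ / (2 * B) := by field_simp
end
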